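/- arXiv:2503.01161 — 11 statements merged into one kernel-verified Lean document; each statement's English description precedes it below -/
import Mathlib

section
/- Let 𝒳 be a nonempty finite set and S : 𝒳 × 𝒳 → ℝ a column-stochastic matrix, i.e. S_{ji} ≥ 0 for all i, j ∈ 𝒳 and Σ_{j∈𝒳} S_{ji} = 1 for every i. Let π, μ : 𝒳 → ℝ be probability mass functions with π(x) > 0 and μ(x) > 0 for all x, and suppose (Sπ)(j) := Σ_{i∈𝒳} S_{ji} π(i) > 0 and (Sμ)(j) > 0 for all j. Then KL(Sπ‖Sμ) ≤ KL(π‖μ); that is, applying one step of a Markov kernel (such as a Metropolis–Hastings step) simultaneously to two distributions does not increase their Kullback–Leibler divergence. -/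
open Finset

/-- Kullback–Leibler divergence `KL(μ‖π) = Σ_x μ(x) log(μ(x)/π(x))` on a finite set. -/
noncomputable def KLdiv {X : Type*} [Fintype X] (μ π : X → ℝ) : ℝ :=
  ∑ x, μ x * Real.log (μ x / π x)

/-- Relative Fisher information
`FI_Q(μ‖π) = Σ_{i,j} π(i) Q_{ji} (f(j) − f(i) − f(i) log(f(j)/f(i)))`, `f = μ/π`. -/
noncomputable def relFI {X : Type*} [Fintype X] (Q : X → X → ℝ) (μ π : X → ℝ) : ℝ :=
  ∑ i, ∑ j, π i * Q j i *
    (μ j / π j - μ i / π i - μ i / π i * Real.log ((μ j / π j) / (μ i / π i)))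

/-- `H_Q(π, φ) = Σ_{i,j} π(i) Q_{ji} (e^{φ(j)−φ(i)} − (φ(j) − φ(i)))`. -/
noncomputable def Hq {X : Type*} [Fintype X] (Q : X → X → ℝ) (π φ : X → ℝ) : ℝ :=
  ∑ i, ∑ j, π i * Q j i * (Real.exp (φ j - φ i) - (φ j - φ i))

/-- A rate matrix: nonnegative off-diagonal entries `Q_{ji}` (jump rate from `i` to `j`)
and zero column sums. -/
def IsRateMatrix {X : Type*} [Fintype X] (Q : X → X → ℝ) : Prop :=
  (∀ i j : X, j ≠ i → 0 ≤ Q j i) ∧ ∀ i : X, ∑ j, Q j i = 0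

/-- Log-sum inequality. -/
lemma log_sum_ineq {ι : Type*} (t : Finset ι) (a b : ι → ℝ)
    (ha : ∀ i ∈ t, 0 ≤ a i) (hb : ∀ i ∈ t, 0 ≤ b i)
    (hab : ∀ i ∈ t, b i = 0 → a i = 0) (hB : 0 < ∑ i ∈ t, b i) :
    (∑ i ∈ t, a i) * Real.log ((∑ i ∈ t, a i) / (∑ i ∈ t, b i)) ≤
      ∑ i ∈ t, a i * Real.log (a i / b i) := by
  set A := ∑ i ∈ t, a i with hA
  set B := ∑ i ∈ t, b i with hBdef
  have key := Real.convexOn_mul_log.map_sum_le (t := t) (w := fun i => b i / B)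
    (p := fun i => a i / b i)
    (fun i hi => div_nonneg (hb i hi) hB.le)
    (by rw [← Finset.sum_div]; field_simp; rfl)
    (fun i hi => Set.mem_Ici.2 (div_nonneg (ha i hi) (hb i hi)))
  have h1 : ∑ i ∈ t, (b i / B) • (a i / b i) = A / B := by
    rw [hA, Finset.sum_div]
    refine Finset.sum_congr rfl fun i hi => ?_
    rcases eq_or_lt_of_le (hb i hi) with h | h
    · simp [← h, hab i hi h.symm]
    · field_simp
      rw [smul_eq_mul]; field_simp [h.ne', hB.ne']
  have h2 : ∑ i ∈ t, (b i / B) • ((a i / b i) * Real.log (a i / b i)) =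
      (∑ i ∈ t, a i * Real.log (a i / b i)) / B := by
    rw [Finset.sum_div]
    refine Finset.sum_congr rfl fun i hi => ?_
    rcases eq_or_lt_of_le (hb i hi) with h | h
    · simp [← h, hab i hi h.symm]
    · field_simp
      rw [smul_eq_mul]; field_simp [h.ne', hB.ne']
  rw [h1, h2] at key
  have := mul_le_mul_of_nonneg_left key hB.le
  rw [mul_div_cancel₀ _ hB.ne', mul_comm] at this
  calc A * Real.log (A / B) = A / B * Real.log (A / B) * B := by
        field_simp
    _ ≤ _ := this

/-- Data processing inequality for KL divergence under a column-stochastic Markov kernel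
(e.g. a Metropolis–Hastings step): `KL(Sπ‖Sμ) ≤ KL(π‖μ)`. -/
theorem stmt_2 {X : Type*} [Fintype X] [Nonempty X]
    (S : X → X → ℝ)
    (hS0 : ∀ i j : X, 0 ≤ S j i) (hS1 : ∀ i : X, ∑ j, S j i = 1)
    (π μ : X → ℝ)
    (hπpos : ∀ x, 0 < π x) (hμpos : ∀ x, 0 < μ x)
    (hπsum : ∑ x, π x = 1) (hμsum : ∑ x, μ x = 1)
    (hSπ : ∀ j, 0 < ∑ i, S j i * π i) (hSμ : ∀ j, 0 < ∑ i, S j i * μ i) :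
    KLdiv (fun j => ∑ i, S j i * π i) (fun j => ∑ i, S j i * μ i) ≤ KLdiv π μ := by
  unfold KLdiv
  have step1 : ∀ j : X,
      (∑ i, S j i * π i) * Real.log ((∑ i, S j i * π i) / (∑ i, S j i * μ i)) ≤
        ∑ i, (S j i * π i) * Real.log ((S j i * π i) / (S j i * μ i)) := by
    intro j
    exact log_sum_ineq Finset.univ (fun i => S j i * π i) (fun i => S j i * μ i)
      (fun i _ => mul_nonneg (hS0 i j) (hπpos i).le)
      (fun i _ => mul_nonneg (hS0 i j) (hμpos i).le)
      (fun i _ h => by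
        rcases mul_eq_zero.1 h with h | h
        · simp [h]
        · exact absurd h (hμpos i).ne')
      (hSμ j)
  calc ∑ j, (∑ i, S j i * π i) * Real.log ((∑ i, S j i * π i) / (∑ i, S j i * μ i))
      ≤ ∑ j, ∑ i, (S j i * π i) * Real.log ((S j i * π i) / (S j i * μ i)) :=
        Finset.sum_le_sum fun j _ => step1 j
    _ = ∑ i, ∑ j, S j i * (π i * Real.log (π i / μ i)) := by
        rw [Finset.sum_comm]
        refine Finset.sum_congr rfl fun i _ => Finset.sum_congr rfl fun j _ => ?_
        rcases eq_or_lt_of_le (hS0 i j) with h | h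
        · rw [← h]; ring_nf
        · have : S j i * π i / (S j i * μ i) = π i / μ i :=
            mul_div_mul_left _ _ h.ne'
          rw [this]; ring
    _ = ∑ i, π i * Real.log (π i / μ i) := by
        refine Finset.sum_congr rfl fun i _ => ?_
        rw [← Finset.sum_mul, hS1 i, one_mul]
end

section
/- Let 𝒳 be a nonempty finite set, B > 0, c ∈ (0,1), and let Q, Q̃ be rate matrices on 𝒳. Let π, μ : ℝ → (𝒳 → ℝ) be families of positive probability mass functions such that at a time t the componentwise derivatives satisfy ∂_t π_t = Q π_t and ∂_t μ_t = Q̃ μ_t, and ‖log(π_t/μ_t)‖_∞ ≤ B. Assume that H_{Q̃}(π_t, λ·log(π_t/μ_t)) ≤ (λ²/c)·H_{Q̃}(π_t, log(π_t/μ_t)) for every λ ∈ (0,1). Then for every real Λ such that Σ_{j∈𝒳} φ(j)·(Qπ_t)(j) − Σ_{i,j∈𝒳} π_t(i) Q̃_{ji} e^{φ(j)−φ(i)} ≤ Λ for all φ : 𝒳 → ℝ (i.e. Λ upper-bounds the Lagrangian L_{Q̃}(π_t, Qπ_t)), the function s ↦ KL(π_s‖μ_s) has derivative at t satisfying d/dt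 KL(π_t‖μ_t) ≤ −(1/2)·FI_{Q̃}(π_t‖μ_t) + (2/c)·Λ. -/
open Finset

/-- FIR-type inequality: under the rescaling property of `H_{Q̃}(π_t, ·)` and the bound
`‖log(π_t/μ_t)‖_∞ ≤ B`, for any upper bound `Λ` on the Lagrangian `L_{Q̃}(π_t, Qπ_t)`,
the derivative of `s ↦ KL(π_s‖μ_s)` at `t` is at most
`−(1/2)·FI_{Q̃}(π_t‖μ_t) + (2/c)·Λ`. -/
theorem stmt_3 {X : Type*} [Fintype X] [Nonempty X]
    (B c : ℝ) (hB : 0 < B) (hc : c ∈ Set.Ioo (0 : ℝ) 1)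
    (Q Qt : X → X → ℝ) (hQ : IsRateMatrix Q) (hQt : IsRateMatrix Qt)
    (π μ : ℝ → X → ℝ) (t : ℝ)
    (hπpos : ∀ s x, 0 < π s x) (hμpos : ∀ s x, 0 < μ s x)
    (hπsum : ∀ s, ∑ x, π s x = 1) (hμsum : ∀ s, ∑ x, μ s x = 1)
    (hπd : ∀ j : X, HasDerivAt (fun s => π s j) (∑ i, Q j i * π t i) t)
    (hμd : ∀ j : X, HasDerivAt (fun s => μ s j) (∑ i, Qt j i * μ t i) t)
    (hlogB : ∀ x, |Real.log (π t x / μ t x)| ≤ B)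
    (hHresc : ∀ lam ∈ Set.Ioo (0 : ℝ) 1,
      Hq Qt (π t) (fun x => lam * Real.log (π t x / μ t x)) ≤
        lam ^ 2 / c * Hq Qt (π t) (fun x => Real.log (π t x / μ t x)))
    (Λ : ℝ)
    (hΛ : ∀ φ : X → ℝ,
      (∑ j, φ j * ∑ i, Q j i * π t i) -
          (∑ i, ∑ j, π t i * Qt j i * Real.exp (φ j - φ i)) ≤ Λ) :
    ∃ d : ℝ, HasDerivAt (fun s => KLdiv (π s) (μ s)) d t ∧
      d ≤ -(1 / 2) * relFI Qt (π t) (μ t) + (2 / c) * Λ := by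
  obtain ⟨hc0, hc1⟩ := hc
  set φ : X → ℝ := fun x => Real.log (π t x / μ t x) with hφdef
  -- the derivative
  have hd : HasDerivAt (fun s => KLdiv (π s) (μ s))
      (∑ x, ((∑ i, Q x i * π t i) * (Real.log (π t x) - Real.log (μ t x))
        + π t x * ((∑ i, Q x i * π t i) / π t x - (∑ i, Qt x i * μ t i) / μ t x))) t := by
    have heq : (fun s => KLdiv (π s) (μ s))
        = fun s => ∑ x, π s x * (Real.log (π s x) - Real.log (μ s x)) := by
      funext s
      unfold KLdiv
      refine Finset.sum_congr rfl fun x _ => ?_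
      rw [Real.log_div (hπpos s x).ne' (hμpos s x).ne']
    rw [heq]
    apply HasDerivAt.fun_sum
    intro x _
    have h1 : HasDerivAt (fun s => Real.log (π s x)) ((∑ i, Q x i * π t i) / π t x) t :=
      (hπd x).log (hπpos t x).ne'
    have h2 : HasDerivAt (fun s => Real.log (μ s x)) ((∑ i, Qt x i * μ t i) / μ t x) t :=
      (hμd x).log (hμpos t x).ne'
    exact (hπd x).mul (h1.sub h2)
  refine ⟨_, hd, ?_⟩
  -- notation
  set S : ℝ := ∑ x, φ x * ∑ i, Q x i * π t i with hSdef
  set E1 : ℝ := ∑ i, ∑ j, π t i * Qt j i * Real.exp (φ j - φ i) with hE1def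
  set L : ℝ := ∑ i, ∑ j, π t i * Qt j i * (φ j - φ i) with hLdef
  set Hφ : ℝ := Hq Qt (π t) φ with hHφdef
  have hexpφ : ∀ x, Real.exp (φ x) = π t x / μ t x := fun x =>
    Real.exp_log (div_pos (hπpos t x) (hμpos t x))
  -- sum of dπ/dt vanishes
  have hPp0 : ∑ x, ∑ i, Q x i * π t i = 0 := by
    rw [Finset.sum_comm]
    refine Finset.sum_eq_zero fun i _ => ?_
    rw [← Finset.sum_mul, hQ.2 i, zero_mul]
  -- the μ'-term equals E1
  have hE1 : ∑ x, π t x * ((∑ i, Qt x i * μ t i) / μ t x) = E1 := by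
    rw [hE1def, Finset.sum_comm]
    refine Finset.sum_congr rfl fun j _ => ?_
    rw [div_eq_mul_inv, Finset.sum_mul, Finset.mul_sum]
    refine Finset.sum_congr rfl fun i _ => ?_
    rw [Real.exp_sub, hexpφ, hexpφ]
    have h1 := (hπpos t i).ne'
    have h2 := (hμpos t i).ne'
    have h3 := (hμpos t j).ne'
    field_simp
  -- the derivative equals S - E1
  have hdval : (∑ x, ((∑ i, Q x i * π t i) * (Real.log (π t x) - Real.log (μ t x))
        + π t x * ((∑ i, Q x i * π t i) / π t x - (∑ i, Qt x i * μ t i) / μ t x)))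
      = S - E1 := by
    have : ∀ x : X, (∑ i, Q x i * π t i) * (Real.log (π t x) - Real.log (μ t x))
        + π t x * ((∑ i, Q x i * π t i) / π t x - (∑ i, Qt x i * μ t i) / μ t x)
        = φ x * (∑ i, Q x i * π t i) + (∑ i, Q x i * π t i)
          - π t x * ((∑ i, Qt x i * μ t i) / μ t x) := by
      intro x
      have hφx : φ x = Real.log (π t x) - Real.log (μ t x) := by
        rw [hφdef]; exact Real.log_div (hπpos t x).ne' (hμpos t x).ne'
      have h1 := (hπpos t x).ne'
      have h2 := (hμpos t x).ne'
      rw [hφx]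
      field_simp
      ring
    rw [Finset.sum_congr rfl fun x _ => this x]
    rw [Finset.sum_sub_distrib, Finset.sum_add_distrib, hPp0, hE1, hSdef]
    ring
  rw [hdval]
  -- Hq φ = E1 - L
  have hHq1 : Hφ = E1 - L := by
    rw [hHφdef, Hq, hE1def, hLdef, ← Finset.sum_sub_distrib]
    refine Finset.sum_congr rfl fun i _ => ?_
    rw [← Finset.sum_sub_distrib]
    refine Finset.sum_congr rfl fun j _ => ?_
    ring
  -- relFI = Hq φ
  have hdiag0 : ∑ i, ∑ j, π t i * Qt j i = 0 := by
    refine Finset.sum_eq_zero fun i _ => ?_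
    rw [← Finset.mul_sum, hQt.2 i, mul_zero]
  have hFI : relFI Qt (π t) (μ t) = Hφ := by
    rw [hHφdef, relFI, Hq]
    have key : ∀ i j : X, μ t i * Qt j i *
        (π t j / μ t j - π t i / μ t i -
          π t i / μ t i * Real.log ((π t j / μ t j) / (π t i / μ t i)))
        = π t i * Qt j i * (Real.exp (φ j - φ i) - (φ j - φ i)) - π t i * Qt j i := by
      intro i j
      have e1 : Real.exp (φ j - φ i) = (π t j / μ t j) / (π t i / μ t i) := by
        rw [Real.exp_sub, hexpφ, hexpφ]
      have e2 : Real.log ((π t j / μ t j) / (π t i / μ t i)) = φ j - φ i := by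
        rw [Real.log_div (div_pos (hπpos t j) (hμpos t j)).ne'
          (div_pos (hπpos t i) (hμpos t i)).ne']
      rw [e1, e2]
      have h1 := (hπpos t i).ne'
      have h2 := (hμpos t i).ne'
      have h3 := (hπpos t j).ne'
      have h4 := (hμpos t j).ne'
      field_simp
      ring
    calc ∑ i, ∑ j, μ t i * Qt j i *
          (π t j / μ t j - π t i / μ t i -
            π t i / μ t i * Real.log ((π t j / μ t j) / (π t i / μ t i)))
        = ∑ i, ∑ j, (π t i * Qt j i * (Real.exp (φ j - φ i) - (φ j - φ i))
            - π t i * Qt j i) := by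
          exact Finset.sum_congr rfl fun i _ => Finset.sum_congr rfl fun j _ => key i j
      _ = (∑ i, ∑ j, π t i * Qt j i * (Real.exp (φ j - φ i) - (φ j - φ i)))
            - ∑ i, ∑ j, π t i * Qt j i := by
          simp [Finset.sum_sub_distrib]
      _ = _ := by rw [hdiag0]; ring
  set lam : ℝ := c / 2 with hlamdef
  have hlam0 : 0 < lam := by positivity
  have hlam1 : lam < 1 := by rw [hlamdef]; linarith
  set Elam : ℝ := ∑ i, ∑ j, π t i * Qt j i * Real.exp (lam * φ j - lam * φ i) with hElamdef
  have hElam : Hq Qt (π t) (fun x => lam * φ x) = Elam - lam * L := by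
    rw [Hq, hElamdef, hLdef, Finset.mul_sum, ← Finset.sum_sub_distrib]
    refine Finset.sum_congr rfl fun i _ => ?_
    rw [Finset.mul_sum, ← Finset.sum_sub_distrib]
    refine Finset.sum_congr rfl fun j _ => ?_
    ring
  have hresc := hHresc lam ⟨hlam0, hlam1⟩
  have hΛlam := hΛ (fun x => lam * φ x)
  have hSmul : ∑ j, (lam * φ j) * ∑ i, Q j i * π t i = lam * S := by
    rw [hSdef, Finset.mul_sum]
    exact Finset.sum_congr rfl fun j _ => by ring
  rw [hSmul] at hΛlam
  rw [← hElamdef] at hΛlam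
  -- combine
  have hfun : (fun x : X => lam * Real.log (π t x / μ t x)) = (fun x => lam * φ x) := rfl
  rw [hfun] at hresc
  have hlamsq : lam ^ 2 / c = c / 4 := by
    rw [hlamdef]; field_simp; ring
  rw [hlamsq] at hresc
  have hkey : lam * (S - E1) ≤ Λ + c / 4 * Hφ - lam * Hφ := by
    have h1 : lam * S ≤ Λ + Elam := by linarith
    have h2 : Elam ≤ c / 4 * Hφ + lam * L := by linarith [hresc, hElam.symm.le]
    have h3 : E1 = Hφ + L := by linarith [hHq1]
    calc lam * (S - E1) = lam * S - lam * E1 := by ring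
      _ ≤ Λ + Elam - lam * E1 := by linarith
      _ ≤ Λ + c / 4 * Hφ + lam * L - lam * (Hφ + L) := by rw [← h3]; linarith
      _ = Λ + c / 4 * Hφ - lam * Hφ := by ring
  rw [hFI]
  have htarget : lam * (-(1 / 2) * Hφ + (2 / c) * Λ) = Λ + c / 4 * Hφ - lam * Hφ := by
    rw [hlamdef]; field_simp; ring
  have := hkey.trans_eq htarget.symm
  exact le_of_mul_le_mul_left this hlam0
end

section
/- Let 𝒳 be a nonempty finite set and B > 0. There exists a constant c ∈ (0,1), depending only on B, such that for every positive probability mass function π on 𝒳, every rate matrix Q̃ on 𝒳, every φ : 𝒳 → ℝ with ‖φ‖_∞ ≤ B, and every λ ∈ (0,1): H_{Q̃}(π, λφ) ≤ (λ²/c)·H_{Q̃}(π, φ). -/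
open Finset

lemma Kmono : Monotone (fun s : ℝ => Real.exp s - 1 - s - s^2/2) := by
  apply monotone_of_deriv_nonneg
  · fun_prop
  · intro x
    have h := (((Real.hasDerivAt_exp x).sub_const 1).sub (hasDerivAt_id x)).sub
        ((hasDerivAt_pow 2 x).div_const 2)
    rw [show deriv (fun s : ℝ => Real.exp s - 1 - s - s^2/2) x = _ from h.deriv]
    have := Real.add_one_le_exp x
    norm_num
    nlinarith

lemma Hanti : Antitone (fun v : ℝ => (1 - v) * Real.exp v - 1 + v^2/2) := by
  apply antitone_of_deriv_nonpos
  · fun_prop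
  · intro x
    have h := ((((hasDerivAt_id x).const_sub 1).mul (Real.hasDerivAt_exp x)).sub_const 1).add
        ((hasDerivAt_pow 2 x).div_const 2)
    simp only [id_eq] at h
    rw [show deriv (fun v : ℝ => (1 - v) * Real.exp v - 1 + v^2/2) x = _ from h.deriv]
    rcases le_or_gt x 0 with hx | hx
    · have h1 : Real.exp x ≤ 1 := Real.exp_le_one_iff.mpr hx
      have h2 : 0 < Real.exp x := Real.exp_pos x
      norm_num
      nlinarith
    · have h1 : 1 ≤ Real.exp x := Real.one_le_exp hx.le
      have h2 : 0 < Real.exp x := Real.exp_pos x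
      norm_num
      nlinarith


lemma g_lower (t : ℝ) : t^2/2 * Real.exp (-|t|) ≤ Real.exp t - t - 1 := by
  rcases le_or_gt 0 t with ht | ht
  · have hK := Kmono ht
    simp only [Real.exp_zero] at hK
    have he : Real.exp (-|t|) ≤ 1 := Real.exp_le_one_iff.mpr (by simp [abs_nonneg])
    nlinarith [sq_nonneg t, Real.exp_pos (-|t|)]
  · have hH := Hanti (le_of_lt (neg_pos.mpr ht))
    simp only [Real.exp_zero] at hH
    have habs : |t| = -t := abs_of_neg ht
    rw [habs, neg_neg]
    have hee : Real.exp (-t) * Real.exp t = 1 := by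
      rw [← Real.exp_add]; simp
    norm_num at hH
    -- hH : (1 + t) * Real.exp (-t) - 1 + t ^ 2 / 2 ≤ 0
    have key : (1 + t) = ((1 + t) * Real.exp (-t)) * Real.exp t := by
      rw [mul_assoc, hee, mul_one]
    have h2 : ((1 + t) * Real.exp (-t)) * Real.exp t ≤ (1 - t^2/2) * Real.exp t :=
      mul_le_mul_of_nonneg_right (by linarith) (Real.exp_pos t).le
    rw [← key] at h2
    nlinarith [h2]

lemma g_upper (s : ℝ) : Real.exp s - s - 1 ≤ s^2/2 * Real.exp |s| := by
  rcases le_or_gt 0 s with hs | hs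
  · have hH := Hanti (by linarith : -s ≤ 0)
    simp only [Real.exp_zero] at hH
    have habs : |s| = s := abs_of_nonneg hs
    rw [habs]
    have hee : Real.exp (-s) * Real.exp s = 1 := by
      rw [← Real.exp_add]; simp
    norm_num at hH
    -- hH : 0 ≤ (1 + s) * Real.exp (-s) - 1 + s^2/2
    have key : (1 + s) = ((1 + s) * Real.exp (-s)) * Real.exp s := by
      rw [mul_assoc, hee, mul_one]
    have h2 : (1 - s^2/2) * Real.exp s ≤ ((1 + s) * Real.exp (-s)) * Real.exp s :=
      mul_le_mul_of_nonneg_right (by linarith) (Real.exp_pos s).le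
    rw [← key] at h2
    nlinarith [h2]
  · have hK := Kmono hs.le
    simp only [Real.exp_zero] at hK
    have he : 1 ≤ Real.exp |s| := Real.one_le_exp (abs_nonneg s)
    nlinarith [sq_nonneg s]

lemma g_key {B t lam : ℝ} (hB : 0 < B) (ht : |t| ≤ 2*B) (h0 : 0 < lam) (h1 : lam < 1) :
    Real.exp (lam*t) - lam*t - 1 ≤ lam^2 * Real.exp (4*B) * (Real.exp t - t - 1) := by
  have habs : |lam * t| ≤ |t| := by
    rw [abs_mul, abs_of_pos h0]
    nlinarith [abs_nonneg t]
  have hexp : Real.exp (2*|t|) * Real.exp (-|t|) = Real.exp |t| := by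
    rw [← Real.exp_add]; ring_nf
  have h5 : Real.exp (2*|t|) ≤ Real.exp (4*B) := Real.exp_le_exp.mpr (by linarith)
  calc Real.exp (lam*t) - lam*t - 1 ≤ (lam*t)^2/2 * Real.exp |lam*t| := g_upper _
    _ ≤ (lam*t)^2/2 * Real.exp |t| := by gcongr
    _ = lam^2 * Real.exp (2*|t|) * (t^2/2 * Real.exp (-|t|)) := by
        rw [← hexp]; ring
    _ ≤ lam^2 * Real.exp (4*B) * (Real.exp t - t - 1) := by
        apply mul_le_mul
        · exact mul_le_mul_of_nonneg_left h5 (by positivity)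
        · exact g_lower t
        · positivity
        · positivity

lemma Hq_eq {X : Type*} [Fintype X] {Q : X → X → ℝ} (hQ : IsRateMatrix Q) (π φ : X → ℝ) :
    Hq Q π φ = ∑ i, ∑ j, π i * Q j i * (Real.exp (φ j - φ i) - (φ j - φ i) - 1) := by
  unfold Hq
  refine Finset.sum_congr rfl fun i _ => ?_
  have h1 : ∑ j, π i * Q j i * (Real.exp (φ j - φ i) - (φ j - φ i))
      = ∑ j, (π i * Q j i * (Real.exp (φ j - φ i) - (φ j - φ i) - 1) + π i * Q j i) := by
    refine Finset.sum_congr rfl fun j _ => ?_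
    ring
  rw [h1, Finset.sum_add_distrib, ← Finset.mul_sum, hQ.2 i, mul_zero, add_zero]

/-- There exists a constant `c ∈ (0,1)` depending only on `B` such that for every
nonempty finite set, every positive pmf `π`, every rate matrix `Q̃`, every `φ` with
`‖φ‖_∞ ≤ B`, and every `λ ∈ (0,1)`: `H_{Q̃}(π, λφ) ≤ (λ²/c)·H_{Q̃}(π, φ)`. -/
theorem stmt_4 (B : ℝ) (hB : 0 < B) :
    ∃ c : ℝ, c ∈ Set.Ioo (0 : ℝ) 1 ∧
      ∀ (X : Type) [Fintype X] [Nonempty X]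
        (π : X → ℝ), (∀ x, 0 < π x) → (∑ x, π x = 1) →
        ∀ Qt : X → X → ℝ, IsRateMatrix Qt →
        ∀ φ : X → ℝ, (∀ x, |φ x| ≤ B) →
        ∀ lam ∈ Set.Ioo (0 : ℝ) 1,
          Hq Qt π (fun x => lam * φ x) ≤ lam ^ 2 / c * Hq Qt π φ := by
  refine ⟨Real.exp (-(4*B)), ⟨Real.exp_pos _, Real.exp_lt_one_iff.mpr (by linarith)⟩, ?_⟩
  intro X _ _ π hπ hπ1 Qt hQ φ hφ lam hlam
  obtain ⟨h0, h1⟩ := hlam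
  have hc : lam ^ 2 / Real.exp (-(4*B)) = lam ^ 2 * Real.exp (4*B) := by
    rw [Real.exp_neg]; field_simp
  rw [hc, Hq_eq hQ, Hq_eq hQ, Finset.mul_sum]
  refine Finset.sum_le_sum fun i _ => ?_
  rw [Finset.mul_sum]
  refine Finset.sum_le_sum fun j _ => ?_
  by_cases hji : j = i
  · subst hji
    simp
  · have hq : 0 ≤ Qt j i := hQ.1 i j hji
    have hπi : 0 ≤ π i := (hπ i).le
    have ht : |φ j - φ i| ≤ 2 * B := by
      calc |φ j - φ i| ≤ |φ j| + |φ i| := abs_sub _ _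
        _ ≤ 2 * B := by linarith [hφ i, hφ j]
    have hkey := g_key hB ht h0 h1
    have heq : lam * φ j - lam * φ i = lam * (φ j - φ i) := by ring
    rw [heq]
    calc π i * Qt j i * (Real.exp (lam * (φ j - φ i)) - lam * (φ j - φ i) - 1)
        ≤ π i * Qt j i * (lam ^ 2 * Real.exp (4*B) * (Real.exp (φ j - φ i) - (φ j - φ i) - 1)) := by
          apply mul_le_mul_of_nonneg_left hkey (by positivity)
      _ = lam ^ 2 * Real.exp (4*B) * (π i * Qt j i * (Real.exp (φ j - φ i) - (φ j - φ i) - 1)) := by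
          ring
end

section
/- Let 𝒳 be a nonempty finite set and Q, Q̃ rate matrices on 𝒳. Let π, μ : ℝ → (𝒳 → ℝ) be families of positive probability mass functions such that at a time t the componentwise derivatives satisfy ∂_t π_t = Q π_t and ∂_t μ_t = Q̃ μ_t. Then the function s ↦ KL(π_s‖μ_s) is differentiable at t with d/dt KL(π_t‖μ_t) = −FI_{Q̃}(π_t‖μ_t) − Σ_{j∈𝒳} log(π_t(j)/μ_t(j)) · ((Q̃ − Q)π_t)(j), where ((Q̃ − Q)π_t)(j) := Σ_{i∈𝒳} (Q̃_{ji} − Q_{ji}) π_t(i). -/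
open Finset

lemma relFI_eq {X : Type*} [Fintype X] (Qt : X → X → ℝ)
    (hQt2 : ∀ i, ∑ j, Qt j i = 0) (p m : X → ℝ) (hp : ∀ x, 0 < p x) (hm : ∀ x, 0 < m x) :
    relFI Qt p m = (∑ j, p j / m j * ∑ i, Qt j i * m i)
      - ∑ j, Real.log (p j / m j) * ∑ i, Qt j i * p i := by
  unfold relFI
  have key : ∀ i j, m i * Qt j i *
      (p j / m j - p i / m i - p i / m i * Real.log ((p j / m j) / (p i / m i)))
      = p j / m j * (Qt j i * m i) - Qt j i * p i
        - (Real.log (p j / m j) * (Qt j i * p i) - p i * Real.log (p i / m i) * Qt j i) := by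
    intro i j
    rw [Real.log_div (div_pos (hp j) (hm j)).ne' (div_pos (hp i) (hm i)).ne']
    have hmi : m i * (p i / m i) = p i := by
      rw [mul_div_assoc']; exact mul_div_cancel_left₀ _ (hm i).ne'
    linear_combination (-Qt j i * (1 + Real.log (p j / m j) - Real.log (p i / m i))) * hmi
  simp only [key, Finset.sum_sub_distrib]
  rw [Finset.sum_comm (f := fun i j => p j / m j * (Qt j i * m i)),
      Finset.sum_comm (f := fun i j => Real.log (p j / m j) * (Qt j i * p i))]
  have h2 : ∑ i, ∑ j, Qt j i * p i = 0 := by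
    simp only [← Finset.sum_mul, hQt2, zero_mul, Finset.sum_const_zero]
  have h3 : ∑ i : X, ∑ j, p i * Real.log (p i / m i) * Qt j i = 0 := by
    simp only [← Finset.mul_sum, hQt2, mul_zero, Finset.sum_const_zero]
  simp only [← Finset.mul_sum] at *
  rw [h2, h3]
  ring

/-- Time derivative of the KL divergence along two continuous-time Markov chains:
if `∂_t π_t = Q π_t` and `∂_t μ_t = Q̃ μ_t` at time `t`, then
`d/dt KL(π_t‖μ_t) = −FI_{Q̃}(π_t‖μ_t) − Σ_j log(π_t(j)/μ_t(j))·((Q̃−Q)π_t)(j)`. -/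
theorem stmt_5 {X : Type*} [Fintype X] [Nonempty X]
    (Q Qt : X → X → ℝ) (hQ : IsRateMatrix Q) (hQt : IsRateMatrix Qt)
    (π μ : ℝ → X → ℝ) (t : ℝ)
    (hπpos : ∀ s x, 0 < π s x) (hμpos : ∀ s x, 0 < μ s x)
    (hπsum : ∀ s, ∑ x, π s x = 1) (hμsum : ∀ s, ∑ x, μ s x = 1)
    (hπd : ∀ j : X, HasDerivAt (fun s => π s j) (∑ i, Q j i * π t i) t)
    (hμd : ∀ j : X, HasDerivAt (fun s => μ s j) (∑ i, Qt j i * μ t i) t) :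
    HasDerivAt (fun s => KLdiv (π s) (μ s))
      (-relFI Qt (π t) (μ t) -
        ∑ j, Real.log (π t j / μ t j) * ∑ i, (Qt j i - Q j i) * π t i) t := by
  set p : X → ℝ := π t with hp
  set m : X → ℝ := μ t with hmm
  set a : X → ℝ := fun j => ∑ i, Q j i * p i with ha
  set b : X → ℝ := fun j => ∑ i, Qt j i * m i with hb
  have hpos : ∀ x, 0 < p x := hπpos t
  have hmpos : ∀ x, 0 < m x := hμpos t
  have key : ∀ j : X, HasDerivAt (fun s => π s j * (Real.log (π s j) - Real.log (μ s j)))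
      (a j * (Real.log (p j) - Real.log (m j)) + p j * (a j / p j - b j / m j)) t :=
    fun j => (hπd j).mul (((hπd j).log (hpos j).ne').sub ((hμd j).log (hmpos j).ne'))
  have hd : HasDerivAt (fun s => ∑ j, π s j * (Real.log (π s j) - Real.log (μ s j)))
      (∑ j, (a j * (Real.log (p j) - Real.log (m j)) + p j * (a j / p j - b j / m j))) t :=
    HasDerivAt.fun_sum fun j _ => key j
  have heq : (fun s => KLdiv (π s) (μ s))
      = fun s => ∑ j, π s j * (Real.log (π s j) - Real.log (μ s j)) := by
    funext s
    unfold KLdiv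
    refine Finset.sum_congr rfl fun x _ => ?_
    rw [Real.log_div (hπpos s x).ne' (hμpos s x).ne']
  rw [heq]
  convert hd using 1
  -- algebraic identity
  rw [relFI_eq Qt hQt.2 p m hpos hmpos]
  have hsa : ∑ j, a j = 0 := by
    rw [ha]
    rw [Finset.sum_comm]
    simp only [← Finset.sum_mul, hQ.2, zero_mul, Finset.sum_const_zero]
  have hsplit : ∀ j, ∑ i, (Qt j i - Q j i) * p i = (∑ i, Qt j i * p i) - a j := by
    intro j; rw [ha]; simp [sub_mul, Finset.sum_sub_distrib]
  have hterm : ∀ j, a j * (Real.log (p j) - Real.log (m j)) + p j * (a j / p j - b j / m j)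
      = Real.log (p j / m j) * a j + a j - p j / m j * b j := by
    intro j
    rw [Real.log_div (hpos j).ne' (hmpos j).ne']
    have h1 : p j * (a j / p j) = a j := by
      rw [mul_div_assoc']; exact mul_div_cancel_left₀ _ (hpos j).ne'
    linear_combination h1
  simp only [hterm]
  simp only [hsplit, mul_sub, Finset.sum_sub_distrib, Finset.sum_add_distrib, hsa]
  ring
end

section
/- Let 𝒳 be a nonempty finite set, Q̃ a rate matrix on 𝒳, and π, μ positive probability mass functions on 𝒳. With φ := log(π/μ), one has the identity H_{Q̃}(π, φ) = FI_{Q̃}(π‖μ). -/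
open Finset

/-- With `φ := log(π/μ)`, one has the identity `H_{Q̃}(π, φ) = FI_{Q̃}(π‖μ)`. -/
theorem stmt_6 {X : Type*} [Fintype X] [Nonempty X]
    (Qt : X → X → ℝ) (hQt : IsRateMatrix Qt)
    (π μ : X → ℝ)
    (hπpos : ∀ x, 0 < π x) (hμpos : ∀ x, 0 < μ x)
    (hπsum : ∑ x, π x = 1) (hμsum : ∑ x, μ x = 1) :
    Hq Qt π (fun x => Real.log (π x / μ x)) = relFI Qt π μ := by
  unfold Hq relFI
  refine Finset.sum_congr rfl fun i _ => ?_
  have hcol : ∑ j, Qt j i = 0 := hQt.2 i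
  have key : ∀ j, π i * Qt j i *
      (Real.exp ((fun x => Real.log (π x / μ x)) j - (fun x => Real.log (π x / μ x)) i)
        - ((fun x => Real.log (π x / μ x)) j - (fun x => Real.log (π x / μ x)) i))
      = μ i * Qt j i *
        (π j / μ j - π i / μ i - π i / μ i * Real.log ((π j / μ j) / (π i / μ i)))
        + π i * Qt j i := by
    intro j
    have hπi := hπpos i; have hπj := hπpos j; have hμi := hμpos i; have hμj := hμpos j
    have h1 : Real.log (π j / μ j) - Real.log (π i / μ i)
        = Real.log ((π j / μ j) / (π i / μ i)) :=
      (Real.log_div (by positivity) (by positivity)).symm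
    have h2 : Real.exp (Real.log (π j / μ j) - Real.log (π i / μ i))
        = (π j / μ j) / (π i / μ i) := by
      rw [h1, Real.exp_log (by positivity)]
    simp only []
    rw [h2, h1]
    set L := Real.log ((π j / μ j) / (π i / μ i))
    field_simp
    ring
  rw [Finset.sum_congr rfl fun j _ => key j, Finset.sum_add_distrib,
    ← Finset.mul_sum, hcol, mul_zero, add_zero]
end

section
/- Let 𝒳 be a nonempty finite set, 0 ≤ ε ≤ 1 and M > 0. Let Q and Q̃ be rate matrices on 𝒳 such that |Q̃_{ji} − Q_{ji}| ≤ ε·Q_{ji} for all j ≠ i, and Σ_{j∈𝒳} |Q_{ji}| ≤ M for every i. Let μ be a probability mass function on 𝒳 (nonnegative, summing to 1). Then for every φ : 𝒳 → ℝ: Σ_{i,j∈𝒳} μ(i) Q̃_{ji} φ(j) − Σ_{i,j∈𝒳} μ(i) Q_{ji} e^{φ(j)−φ(i)} ≤ M·ε. (That is, the Lagrangian L_Q(μ, Q̃μ) := sup_{φ:𝒳→ℝ} [⟨φ, Q̃μ⟩ − Σ_{i,j} μ(i) Q_{ji} e^{φ(j)−φ(i)}] is at most Mε.) -/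
open Finset

lemma key_ineq (ε x : ℝ) (hε0 : 0 ≤ ε) (hε1 : ε ≤ 1) :
    x + ε * |x| + 1 - Real.exp x ≤ ε := by
  rcases le_or_gt 0 x with hx | hx
  · rw [abs_of_nonneg hx]
    have h1 := Real.add_one_le_exp (x / 2)
    have h2 : Real.exp x = Real.exp (x / 2) * Real.exp (x / 2) := by
      rw [← Real.exp_add]; ring_nf
    have h3 : (0:ℝ) ≤ x / 2 + 1 := by linarith
    have h4 := mul_self_le_mul_self h3 h1
    nlinarith [mul_nonneg hε0 (sq_nonneg (x / 2 - 1)),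
      mul_nonneg (by linarith : (0:ℝ) ≤ 1 - ε) (sq_nonneg (x / 2))]
  · rw [abs_of_neg hx]
    have h1 := Real.add_one_le_exp x
    have h2 := (Real.exp_pos x).le
    rcases le_or_gt (-1) x with h | h
    · nlinarith [mul_nonneg hε0 (by linarith : (0:ℝ) ≤ x + 1)]
    · nlinarith [mul_nonneg (by linarith : (0:ℝ) ≤ 1 - ε) (by linarith : (0:ℝ) ≤ -(x + 1))]

/-- Bound on the Lagrangian `L_Q(μ, Q̃μ)`: if `|Q̃_{ji} − Q_{ji}| ≤ ε·Q_{ji}` off the diagonal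
and `Σ_j |Q_{ji}| ≤ M`, then for every `φ`,
`Σ_{i,j} μ(i) Q̃_{ji} φ(j) − Σ_{i,j} μ(i) Q_{ji} e^{φ(j)−φ(i)} ≤ M·ε`. -/
theorem stmt_7 {X : Type*} [Fintype X] [Nonempty X]
    (ε M : ℝ) (hε0 : 0 ≤ ε) (hε1 : ε ≤ 1) (hM : 0 < M)
    (Q Qt : X → X → ℝ) (hQ : IsRateMatrix Q) (hQt : IsRateMatrix Qt)
    (happrox : ∀ i j : X, j ≠ i → |Qt j i - Q j i| ≤ ε * Q j i)
    (hbound : ∀ i : X, ∑ j, |Q j i| ≤ M)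
    (μ : X → ℝ) (hμ0 : ∀ x, 0 ≤ μ x) (hμsum : ∑ x, μ x = 1)
    (φ : X → ℝ) :
    (∑ i, ∑ j, μ i * Qt j i * φ j) -
        (∑ i, ∑ j, μ i * Q j i * Real.exp (φ j - φ i)) ≤ M * ε := by
  obtain ⟨hQpos, hQsum⟩ := hQ
  obtain ⟨hQtpos, hQtsum⟩ := hQt
  have hinner : ∀ i : X,
      (∑ j, Qt j i * φ j) - (∑ j, Q j i * Real.exp (φ j - φ i)) ≤ M * ε := by
    intro i
    have e1 : ∑ j, Qt j i * φ j = ∑ j, Qt j i * (φ j - φ i) := by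
      have h := hQtsum i
      simp only [mul_sub, Finset.sum_sub_distrib, ← Finset.sum_mul, h]
      ring
    have e2 : ∑ j, Q j i * Real.exp (φ j - φ i)
        = ∑ j, Q j i * (Real.exp (φ j - φ i) - 1) := by
      have h := hQsum i
      simp only [mul_sub, Finset.sum_sub_distrib, mul_one, h]
      ring
    rw [e1, e2, ← Finset.sum_sub_distrib]
    have hterm : ∀ j : X,
        Qt j i * (φ j - φ i) - Q j i * (Real.exp (φ j - φ i) - 1) ≤ ε * |Q j i| := by
      intro j
      by_cases hji : j = i
      · subst hji
        simp [mul_nonneg hε0 (abs_nonneg (Q j j))]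
      · have hq : 0 ≤ Q j i := hQpos i j hji
        have happ := happrox i j hji
        set δ := φ j - φ i with hδ
        have hkey := key_ineq ε δ hε0 hε1
        have h5 : (Qt j i - Q j i) * δ ≤ ε * Q j i * |δ| :=
          calc (Qt j i - Q j i) * δ ≤ |(Qt j i - Q j i) * δ| := le_abs_self _
            _ = |Qt j i - Q j i| * |δ| := abs_mul _ _
            _ ≤ ε * Q j i * |δ| := mul_le_mul_of_nonneg_right happ (abs_nonneg _)
        have h6 : Q j i * (δ + ε * |δ| + 1 - Real.exp δ) ≤ Q j i * ε :=
          mul_le_mul_of_nonneg_left hkey hq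
        rw [abs_of_nonneg hq]
        nlinarith
    calc ∑ j, (Qt j i * (φ j - φ i) - Q j i * (Real.exp (φ j - φ i) - 1))
        ≤ ∑ j, ε * |Q j i| := Finset.sum_le_sum fun j _ => hterm j
      _ = ε * ∑ j, |Q j i| := by rw [Finset.mul_sum]
      _ ≤ ε * M := mul_le_mul_of_nonneg_left (hbound i) hε0
      _ = M * ε := mul_comm _ _
  calc (∑ i, ∑ j, μ i * Qt j i * φ j) -
        (∑ i, ∑ j, μ i * Q j i * Real.exp (φ j - φ i))
      = ∑ i, μ i * ((∑ j, Qt j i * φ j) - (∑ j, Q j i * Real.exp (φ j - φ i))) := by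
        simp only [mul_sub, Finset.mul_sum, Finset.sum_sub_distrib, mul_assoc]
    _ ≤ ∑ i, μ i * (M * ε) :=
        Finset.sum_le_sum fun i _ => mul_le_mul_of_nonneg_left (hinner i) (hμ0 i)
    _ = M * ε := by rw [← Finset.sum_mul, hμsum, one_mul]
end

section
/- Let 𝒳 be a nonempty finite set. Let A : 𝒳 × 𝒳 → ℝ satisfy A_{ij} ≥ 0 for all i ≠ j (forward jump rates), and let s, t : 𝒳 × 𝒳 → ℝ satisfy s_{ij} > 0 and t_{ij} > 0 for all i ≠ j (true and estimated concrete scores). Define matrices Q and Q̃ by Q_{ji} := A_{ij}·s_{ij} and Q̃_{ji} := A_{ij}·t_{ij} for j ≠ i, with diagonal entries chosen so that both have zero column sums. Let π be a positive probability mass function on 𝒳. Then for every φ : 𝒳 → ℝ: Σ_{i,j∈𝒳} π(i) Q_{ji} φ(j) − Σ_{i,j∈𝒳} π(i) Q̃_{ji} e^{φ(j)−φ(i)} ≤ Σ_{i≠j} π(i) A_{ij} s_{ij} K(t_{ij}/s_{ij}), where K(a) := a − 1 − log a. (That is, the Lagrangian L_{Q̃}(π, Qπ) is bounded by the score-entropy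 error.) -/
open Finset

private lemma key_ineq_s8 (a b x : ℝ) (ha : 0 < a) (hb : 0 < b) :
    a * x - b * (Real.exp x - 1) ≤ a * (b / a - 1 - Real.log (b / a)) := by
  have h := Real.add_one_le_exp (x + Real.log (b / a))
  rw [Real.exp_add, Real.exp_log (by positivity)] at h
  have h2 : (x + Real.log (b / a) + 1) * a ≤ Real.exp x * (b / a) * a :=
    mul_le_mul_of_nonneg_right h ha.le
  have hba : b / a * a = b := div_mul_cancel₀ b ha.ne'
  rw [mul_assoc, hba] at h2
  have h4 : a * (b / a - 1 - Real.log (b / a)) = b - a - a * Real.log (b / a) := by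
    field_simp
  rw [h4]
  nlinarith [h2]

/-- The Lagrangian `L_{Q̃}(π, Qπ)` is bounded by the score-entropy error: with
`Q_{ji} = A_{ij}·s_{ij}` and `Q̃_{ji} = A_{ij}·t_{ij}` off the diagonal (zero column sums),
for every `φ`,
`Σ_{i,j} π(i) Q_{ji} φ(j) − Σ_{i,j} π(i) Q̃_{ji} e^{φ(j)−φ(i)}
  ≤ Σ_{i≠j} π(i) A_{ij} s_{ij} K(t_{ij}/s_{ij})`, where `K(a) = a − 1 − log a`. -/
theorem stmt_8 {X : Type*} [Fintype X] [Nonempty X] [DecidableEq X]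
    (A s t : X → X → ℝ)
    (hA : ∀ i j : X, i ≠ j → 0 ≤ A i j)
    (hs : ∀ i j : X, i ≠ j → 0 < s i j)
    (ht : ∀ i j : X, i ≠ j → 0 < t i j)
    (Q Qt : X → X → ℝ)
    (hQoff : ∀ i j : X, j ≠ i → Q j i = A i j * s i j)
    (hQtoff : ∀ i j : X, j ≠ i → Qt j i = A i j * t i j)
    (hQcol : ∀ i : X, ∑ j, Q j i = 0)
    (hQtcol : ∀ i : X, ∑ j, Qt j i = 0)
    (π : X → ℝ) (hπpos : ∀ x, 0 < π x) (hπsum : ∑ x, π x = 1)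
    (φ : X → ℝ) :
    (∑ i, ∑ j, π i * Q j i * φ j) -
        (∑ i, ∑ j, π i * Qt j i * Real.exp (φ j - φ i)) ≤
      ∑ i, ∑ j ∈ Finset.univ.erase i,
        π i * A i j * s i j * (t i j / s i j - 1 - Real.log (t i j / s i j)) := by
  have step : ∀ i : X,
      (∑ j, π i * Q j i * φ j) - (∑ j, π i * Qt j i * Real.exp (φ j - φ i))
        ≤ ∑ j ∈ Finset.univ.erase i,
            π i * A i j * s i j * (t i j / s i j - 1 - Real.log (t i j / s i j)) := by
    intro i
    have h1 : (∑ j, π i * Q j i * φ j)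
        = ∑ j ∈ Finset.univ.erase i, π i * Q j i * (φ j - φ i) := by
      have e1 : (∑ j, π i * Q j i * (φ j - φ i))
          = (∑ j, π i * Q j i * φ j) - π i * φ i * ∑ j, Q j i := by
        rw [Finset.mul_sum]
        rw [← Finset.sum_sub_distrib]
        congr 1; ext j; ring
      rw [hQcol i] at e1
      have e2 : (∑ j ∈ Finset.univ.erase i, π i * Q j i * (φ j - φ i))
          = ∑ j, π i * Q j i * (φ j - φ i) :=
        Finset.sum_erase _ (by simp)
      rw [e2]; linarith [e1]
    have h2 : (∑ j, π i * Qt j i * Real.exp (φ j - φ i))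
        = ∑ j ∈ Finset.univ.erase i, π i * Qt j i * (Real.exp (φ j - φ i) - 1) := by
      have e1 : (∑ j, π i * Qt j i * (Real.exp (φ j - φ i) - 1))
          = (∑ j, π i * Qt j i * Real.exp (φ j - φ i)) - π i * ∑ j, Qt j i := by
        rw [Finset.mul_sum]
        rw [← Finset.sum_sub_distrib]
        congr 1; ext j; ring
      rw [hQtcol i] at e1
      have e2 : (∑ j ∈ Finset.univ.erase i, π i * Qt j i * (Real.exp (φ j - φ i) - 1))
          = ∑ j, π i * Qt j i * (Real.exp (φ j - φ i) - 1) :=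
        Finset.sum_erase _ (by simp)
      rw [e2]; linarith [e1]
    rw [h1, h2, ← Finset.sum_sub_distrib]
    apply Finset.sum_le_sum
    intro j hj
    have hji : j ≠ i := Finset.ne_of_mem_erase hj
    have hij : i ≠ j := hji.symm
    rw [hQoff i j hji, hQtoff i j hji]
    have key := key_ineq_s8 (s i j) (t i j) (φ j - φ i) (hs i j hij) (ht i j hij)
    have hπA : 0 ≤ π i * A i j := mul_nonneg (hπpos i).le (hA i j hij)
    nlinarith [mul_le_mul_of_nonneg_left key hπA]
  calc (∑ i, ∑ j, π i * Q j i * φ j) - (∑ i, ∑ j, π i * Qt j i * Real.exp (φ j - φ i))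
      = ∑ i, ((∑ j, π i * Q j i * φ j) - (∑ j, π i * Qt j i * Real.exp (φ j - φ i))) := by
        rw [Finset.sum_sub_distrib]
    _ ≤ _ := Finset.sum_le_sum fun i _ => step i
end

section
/- Let 𝒳 be a nonempty finite set, Q a rate matrix on 𝒳, and μ, π positive probability mass functions on 𝒳. Then FI_Q(μ‖π) ≥ 0. Moreover, if Q_{ji} > 0 for all j ≠ i, then FI_Q(μ‖π) = 0 if and only if μ = π. -/
open Finset

/-- Key scalar inequality: for `a, b > 0`, `0 ≤ b - a - a * log (b / a)`. -/
lemma key_nonneg {a b : ℝ} (ha : 0 < a) (hb : 0 < b) :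
    0 ≤ b - a - a * Real.log (b / a) := by
  have h : Real.log (b / a) ≤ b / a - 1 :=
    Real.log_le_sub_one_of_pos (div_pos hb ha)
  have := mul_le_mul_of_nonneg_left h ha.le
  have h2 : a * (b / a - 1) = b - a := by field_simp
  nlinarith

lemma key_eq {a b : ℝ} (ha : 0 < a) (hb : 0 < b)
    (h : b - a - a * Real.log (b / a) = 0) : a = b := by
  by_contra hne
  have hba : b / a ≠ 1 := by
    intro h1
    exact hne ((div_eq_one_iff_eq ha.ne').mp h1).symm
  have hlt : Real.log (b / a) < b / a - 1 :=
    Real.log_lt_sub_one_of_pos (div_pos hb ha) hba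
  have := mul_lt_mul_of_pos_left hlt ha
  have h2 : a * (b / a - 1) = b - a := by field_simp
  nlinarith

/-- Nonnegativity of the relative Fisher information, and its vanishing characterizes
equality of the two distributions when the rate matrix is strongly irreducible. -/
theorem stmt_9 {X : Type*} [Fintype X] [Nonempty X]
    (Q : X → X → ℝ) (hQ : IsRateMatrix Q)
    (μ π : X → ℝ)
    (hμpos : ∀ x, 0 < μ x) (hπpos : ∀ x, 0 < π x)
    (hμsum : ∑ x, μ x = 1) (hπsum : ∑ x, π x = 1) :
    0 ≤ relFI Q μ π ∧
      ((∀ i j : X, j ≠ i → 0 < Q j i) → (relFI Q μ π = 0 ↔ μ = π)) := by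
  set f : X → ℝ := fun x => μ x / π x with hf
  have hfpos : ∀ x, 0 < f x := fun x => div_pos (hμpos x) (hπpos x)
  set g : X → X → ℝ := fun i j => f j - f i - f i * Real.log (f j / f i) with hg
  have hgdiag : ∀ i, g i i = 0 := by
    intro i
    simp [hg, div_self (hfpos i).ne']
  have hterm : ∀ i j, j ≠ i → 0 ≤ Q j i → 0 ≤ π i * Q j i * g i j := by
    intro i j _ hQji
    exact mul_nonneg (mul_nonneg (hπpos i).le hQji) (key_nonneg (hfpos i) (hfpos j))
  have htermnn : ∀ i j, 0 ≤ π i * Q j i * g i j := by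
    intro i j
    rcases eq_or_ne j i with h | h
    · subst h; simp [hgdiag]
    · exact hterm i j h (hQ.1 i j h)
  have hrel : relFI Q μ π = ∑ i, ∑ j, π i * Q j i * g i j := rfl
  have hnn : 0 ≤ relFI Q μ π := by
    rw [hrel]
    exact Finset.sum_nonneg fun i _ => Finset.sum_nonneg fun j _ => htermnn i j
  refine ⟨hnn, fun hQpos => ⟨fun hzero => ?_, fun heq => ?_⟩⟩
  · -- relFI = 0 → μ = π
    rw [hrel] at hzero
    have houter := (Finset.sum_eq_zero_iff_of_nonneg
      (fun i _ => Finset.sum_nonneg fun j _ => htermnn i j)).mp hzero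
    have hall : ∀ i j : X, π i * Q j i * g i j = 0 := by
      intro i j
      have := (Finset.sum_eq_zero_iff_of_nonneg
        (fun j _ => htermnn i j)).mp (houter i (Finset.mem_univ i)) j (Finset.mem_univ j)
      exact this
    have hfconst : ∀ i j : X, f i = f j := by
      intro i j
      rcases eq_or_ne j i with h | h
      · rw [h]
      · have hpos : 0 < π i * Q j i := mul_pos (hπpos i) (hQpos i j h)
        have hg0 : g i j = 0 := by
          have := hall i j
          rcases mul_eq_zero.mp this with h1 | h1
          · exact absurd h1 hpos.ne'
          · exact h1
        exact key_eq (hfpos i) (hfpos j) hg0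
    -- f constant; sums force f = 1
    obtain ⟨x0⟩ := ‹Nonempty X›
    have hsum : ∑ x, μ x = ∑ x, f x0 * π x := by
      apply Finset.sum_congr rfl
      intro x _
      have : f x = f x0 := hfconst x x0
      have hμx : μ x = f x * π x := by
        rw [hf]; exact (div_mul_cancel₀ (μ x) (hπpos x).ne').symm
      rw [hμx, this]
    rw [hμsum, ← Finset.mul_sum, hπsum, mul_one] at hsum
    funext x
    have : f x = 1 := by rw [hfconst x x0, ← hsum]
    rw [hf] at this
    exact (div_eq_one_iff_eq (hπpos x).ne').mp this
  · -- μ = π → relFI = 0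
    subst heq
    rw [hrel]
    apply Finset.sum_eq_zero
    intro i _
    apply Finset.sum_eq_zero
    intro j _
    have : g i j = 0 := by
      simp [hg, hf, div_self (hπpos i).ne', div_self (hπpos j).ne']
    rw [this, mul_zero]
end

section
/- Let N ≥ 2 and D ≥ 1 be integers, let 𝒮 := (Fin N)^D with Hamming distance d, and let f, g : 𝒮 → ℝ. For η > 0 define w(η) := log((1 + (N−1)e^{−η})/((N−1)(1 − e^{−η}))) and the augmented split-Gibbs distribution π_η(x, z) := exp(−f(z) − g(x) − d(x,z)·w(η)) / Z(η), where Z(η) := Σ_{x,z∈𝒮} exp(−f(z) − g(x) − d(x,z)·w(η)). Then as η → 0⁺ both marginals of π_η converge to the posterior distribution: for every x₀ ∈ 𝒮, lim_{η→0⁺} Σ_{z∈𝒮} π_η(x₀, z) = e^{−f(x₀)−g(x₀)} / Σ_{x∈𝒮} e^{−f(x)−g(x)}, and for every z₀ ∈ 𝒮, lim_{η→0⁺} Σ_{x∈𝒮} π_η(x, z₀) = e^{−f(z₀)−g(z₀)} / Σ_{x∈𝒮} e^{−f(x)−g(x)}. -/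
open Finset

/-- Convergence of both marginals of the augmented split-Gibbs distribution
`π_η(x,z) ∝ exp(−f(z) − g(x) − d(x,z)·w(η))` to the posterior
`x ↦ e^{−f(x)−g(x)} / Σ_{x'} e^{−f(x')−g(x')}` as `η → 0⁺`. -/
theorem stmt_10 (N D : ℕ) (hN : 2 ≤ N) (hD : 1 ≤ D)
    (f g : (Fin D → Fin N) → ℝ)
    (w : ℝ → ℝ)
    (hw : ∀ η, w η = Real.log
      ((1 + ((N : ℝ) - 1) * Real.exp (-η)) / (((N : ℝ) - 1) * (1 - Real.exp (-η)))))
    (Z : ℝ → ℝ)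
    (hZ : ∀ η, Z η = ∑ x : Fin D → Fin N, ∑ z : Fin D → Fin N,
      Real.exp (-f z - g x - (hammingDist x z : ℝ) * w η))
    (π : ℝ → (Fin D → Fin N) → (Fin D → Fin N) → ℝ)
    (hπ : ∀ η x z,
      π η x z = Real.exp (-f z - g x - (hammingDist x z : ℝ) * w η) / Z η) :
    (∀ x0 : Fin D → Fin N,
      Filter.Tendsto (fun η : ℝ => ∑ z : Fin D → Fin N, π η x0 z)
        (nhdsWithin 0 (Set.Ioi 0))
        (nhds (Real.exp (-f x0 - g x0) /
          ∑ x : Fin D → Fin N, Real.exp (-f x - g x)))) ∧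
    (∀ z0 : Fin D → Fin N,
      Filter.Tendsto (fun η : ℝ => ∑ x : Fin D → Fin N, π η x z0)
        (nhdsWithin 0 (Set.Ioi 0))
        (nhds (Real.exp (-f z0 - g z0) /
          ∑ x : Fin D → Fin N, Real.exp (-f x - g x)))) := by
  have hNpos : (0:ℝ) < N := by positivity
  have hN1 : (1:ℝ) ≤ (N:ℝ) - 1 := by
    have : (2:ℝ) ≤ N := by exact_mod_cast hN
    linarith
  haveI : NeZero N := ⟨by omega⟩
  -- w tends to +∞ as η → 0⁺
  have hwtop : Filter.Tendsto w (nhdsWithin 0 (Set.Ioi 0)) Filter.atTop := by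
    have hnum : Filter.Tendsto (fun η : ℝ => 1 + ((N:ℝ)-1) * Real.exp (-η))
        (nhdsWithin 0 (Set.Ioi 0)) (nhds (N:ℝ)) := by
      have hc : Continuous (fun η : ℝ => 1 + ((N:ℝ)-1) * Real.exp (-η)) := by continuity
      have := tendsto_nhdsWithin_of_tendsto_nhds (s := Set.Ioi (0:ℝ)) (hc.tendsto 0)
      simpa using this
    have hden : Filter.Tendsto (fun η : ℝ => ((N:ℝ)-1) * (1 - Real.exp (-η)))
        (nhdsWithin 0 (Set.Ioi 0)) (nhdsWithin 0 (Set.Ioi 0)) := by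
      rw [tendsto_nhdsWithin_iff]
      constructor
      · have hc : Continuous (fun η : ℝ => ((N:ℝ)-1) * (1 - Real.exp (-η))) := by continuity
        have := tendsto_nhdsWithin_of_tendsto_nhds (s := Set.Ioi (0:ℝ)) (hc.tendsto 0)
        simpa using this
      · filter_upwards [self_mem_nhdsWithin] with η hη
        have hη' : (0:ℝ) < η := hη
        have : Real.exp (-η) < 1 := Real.exp_lt_one_iff.mpr (by linarith)
        have : (0:ℝ) < 1 - Real.exp (-η) := by linarith
        exact Set.mem_Ioi.mpr (mul_pos (by linarith) this)
    have hinv : Filter.Tendsto (fun η : ℝ => (((N:ℝ)-1) * (1 - Real.exp (-η)))⁻¹)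
        (nhdsWithin 0 (Set.Ioi 0)) Filter.atTop := tendsto_inv_nhdsGT_zero.comp hden
    have hdiv : Filter.Tendsto
        (fun η : ℝ => (1 + ((N:ℝ)-1) * Real.exp (-η)) / (((N:ℝ)-1) * (1 - Real.exp (-η))))
        (nhdsWithin 0 (Set.Ioi 0)) Filter.atTop := by
      simp only [div_eq_mul_inv]
      exact Filter.Tendsto.pos_mul_atTop hNpos hnum hinv
    exact Filter.Tendsto.congr (fun η => (hw η).symm) (Real.tendsto_log_atTop.comp hdiv)
  -- per-term limit
  have key : ∀ x z : Fin D → Fin N,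
      Filter.Tendsto (fun η : ℝ => Real.exp (-f z - g x - (hammingDist x z : ℝ) * w η))
        (nhdsWithin 0 (Set.Ioi 0))
        (nhds (if x = z then Real.exp (-f x - g x) else 0)) := by
    intro x z
    by_cases hxz : x = z
    · subst hxz
      simp only [if_pos rfl, hammingDist_self, Nat.cast_zero, zero_mul, sub_zero]
      exact tendsto_const_nhds
    · simp only [if_neg hxz]
      have hd : (0:ℝ) < (hammingDist x z : ℝ) := by
        have : hammingDist x z ≠ 0 := fun h => hxz (hammingDist_eq_zero.mp h)
        exact_mod_cast Nat.pos_of_ne_zero this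
      have h1 : Filter.Tendsto (fun η : ℝ => -((hammingDist x z : ℝ) * w η))
          (nhdsWithin 0 (Set.Ioi 0)) Filter.atBot :=
        Filter.tendsto_neg_atTop_atBot.comp (hwtop.const_mul_atTop hd)
      have h2 : Filter.Tendsto (fun η : ℝ =>
          Real.exp (-f z - g x) * Real.exp (-((hammingDist x z : ℝ) * w η)))
          (nhdsWithin 0 (Set.Ioi 0)) (nhds (Real.exp (-f z - g x) * 0)) :=
        (Real.tendsto_exp_atBot.comp h1).const_mul _
      rw [mul_zero] at h2
      refine h2.congr (fun η => ?_)
      rw [← Real.exp_add]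
      ring_nf
  -- limits of the row sums
  have hS : ∀ x0 : Fin D → Fin N,
      Filter.Tendsto (fun η : ℝ => ∑ z : Fin D → Fin N,
          Real.exp (-f z - g x0 - (hammingDist x0 z : ℝ) * w η))
        (nhdsWithin 0 (Set.Ioi 0)) (nhds (Real.exp (-f x0 - g x0))) := by
    intro x0
    have := tendsto_finset_sum (univ : Finset (Fin D → Fin N)) (fun z _ => key x0 z)
    simpa [Finset.sum_ite_eq] using this
  -- Z limit
  have hZt : Filter.Tendsto Z (nhdsWithin 0 (Set.Ioi 0))
      (nhds (∑ x : Fin D → Fin N, Real.exp (-f x - g x))) := by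
    have := tendsto_finset_sum (univ : Finset (Fin D → Fin N)) (fun x _ => hS x)
    exact Filter.Tendsto.congr (fun η => (hZ η).symm) this
  have hZne : (∑ x : Fin D → Fin N, Real.exp (-f x - g x)) ≠ 0 := by
    have : (0:ℝ) < ∑ x : Fin D → Fin N, Real.exp (-f x - g x) :=
      Finset.sum_pos (fun x _ => Real.exp_pos _) Finset.univ_nonempty
    exact this.ne'
  constructor
  · intro x0
    have := (hS x0).div hZt hZne
    refine this.congr (fun η => ?_)
    simp only [hπ, Finset.sum_div, Pi.div_apply]
  · intro z0
    have hcol : Filter.Tendsto (fun η : ℝ => ∑ x : Fin D → Fin N,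
        Real.exp (-f z0 - g x - (hammingDist x z0 : ℝ) * w η))
        (nhdsWithin 0 (Set.Ioi 0)) (nhds (Real.exp (-f z0 - g z0))) := by
      have := tendsto_finset_sum (univ : Finset (Fin D → Fin N)) (fun x _ => key x z0)
      simpa [Finset.sum_ite_eq'] using this
    have := hcol.div hZt hZne
    refine this.congr (fun η => ?_)
    simp only [hπ, Finset.sum_div, Pi.div_apply]
end

section
/- Let 𝒳 be a nonempty finite set, T ∈ ℝ, and Q^fw : ℝ → (𝒳 × 𝒳 → ℝ) a family of matrices with zero column sums, i.e. Σ_{j∈𝒳} Q^fw_t(j, i) = 0 for all i and t. Let p : ℝ → (𝒳 → ℝ) be a family of positive functions satisfying, componentwise, ∂_t p_t(j) = Σ_{i∈𝒳} Q^fw_t(j, i) p_t(i) for all t. For each t define the reverse matrix Q_t by Q_t(i, j) := (p_{T−t}(i)/p_{T−t}(j))·Q^fw_{T−t}(j, i) for i ≠ j, and Q_t(i, i) := −Σ_{j≠i} Q_t(j, i). Then the time-reversed family q_t := p_{T−t} satisfies, componentwise, ∂_t q_t(i) = Σ_{j∈𝒳} Q_t(i, j) q_t(j) for all t; that is, the reverse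 continuous-time Markov chain with generator Q_t reproduces the forward marginals run backwards in time. -/
open Finset

/-- Time reversal of a continuous-time Markov chain: if `∂_t p_t = Q^fw_t p_t` with
zero-column-sum matrices `Q^fw_t`, and `Q_t(i,j) := (p_{T−t}(i)/p_{T−t}(j))·Q^fw_{T−t}(j,i)`
for `i ≠ j` with diagonal `Q_t(i,i) := −Σ_{j≠i} Q_t(j,i)`, then the time-reversed family
`q_t := p_{T−t}` satisfies `∂_t q_t(i) = Σ_j Q_t(i,j) q_t(j)`. -/
theorem stmt_14 {X : Type*} [Fintype X] [Nonempty X] [DecidableEq X] (T : ℝ)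
    (Qfw : ℝ → X → X → ℝ)
    (hQfw : ∀ t i, ∑ j, Qfw t j i = 0)
    (p : ℝ → X → ℝ) (hp : ∀ t x, 0 < p t x)
    (hdp : ∀ t (j : X), HasDerivAt (fun s => p s j) (∑ i, Qfw t j i * p t i) t)
    (Q : ℝ → X → X → ℝ)
    (hQoff : ∀ t (i j : X), i ≠ j →
      Q t i j = p (T - t) i / p (T - t) j * Qfw (T - t) j i)
    (hQdiag : ∀ t (i : X), Q t i i = -∑ j ∈ Finset.univ.erase i, Q t j i) :
    ∀ t (i : X),
      HasDerivAt (fun s => p (T - s) i) (∑ j, Q t i j * p (T - t) j) t := by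
  intro t i
  have hchain : HasDerivAt (fun s => p (T - s) i)
      ((∑ k, Qfw (T - t) i k * p (T - t) k) * (-1)) t :=
    (hdp (T - t) i).comp t ((hasDerivAt_id t).const_sub T)
  convert hchain using 1
  -- algebra
  have key : ∑ j, Q t i j * p (T - t) j
      = -∑ k, Qfw (T - t) i k * p (T - t) k := by
    rw [← Finset.add_sum_erase _ _ (Finset.mem_univ i),
        ← Finset.add_sum_erase Finset.univ (fun k => Qfw (T - t) i k * p (T - t) k)
          (Finset.mem_univ i)]
    have h1 : ∑ j ∈ Finset.univ.erase i, Q t i j * p (T - t) j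
        = p (T - t) i * ∑ j ∈ Finset.univ.erase i, Qfw (T - t) j i := by
      rw [Finset.mul_sum]
      refine Finset.sum_congr rfl fun j hj => ?_
      have hji : i ≠ j := (Finset.ne_of_mem_erase hj).symm
      rw [hQoff t i j hji]
      field_simp [(hp (T - t) j).ne']
    have h2 : ∑ j ∈ Finset.univ.erase i, Qfw (T - t) j i = -Qfw (T - t) i i := by
      have := hQfw (T - t) i
      rw [← Finset.add_sum_erase _ _ (Finset.mem_univ i)] at this
      linarith
    have h3 : Q t i i = -∑ j ∈ Finset.univ.erase i,
        p (T - t) j / p (T - t) i * Qfw (T - t) i j := by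
      rw [hQdiag]
      congr 1
      exact Finset.sum_congr rfl fun j hj => hQoff t j i (Finset.ne_of_mem_erase hj)
    have h4 : ∀ j ∈ Finset.univ.erase i,
        p (T - t) j / p (T - t) i * Qfw (T - t) i j * p (T - t) i
          = Qfw (T - t) i j * p (T - t) j := by
      intro j _
      field_simp [(hp (T - t) i).ne']
    rw [h3, h1, h2, neg_mul, Finset.sum_mul, Finset.sum_congr rfl h4]
    ring
  rw [key]; ring
end

section
/- Let n ≥ 1 be an integer, ε > 0, and Q an n×n real matrix with zero column sums (Σ_j Q_{ji} = 0 for every i) and off-diagonal entries Q_{ji} ≥ ε for all j ≠ i. Then every complex eigenvalue λ of Q (viewing Q as a complex matrix) with λ ≠ 0 satisfies Re λ ≤ −n·ε; equivalently, the spectral gap γ(Q) := min_{λ ≠ 0} (−Re λ) over nonzero eigenvalues satisfies γ(Q) ≥ n·ε. -/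
open Finset Matrix

/-- Spectral gap of a rate matrix with uniformly positive off-diagonal entries:
if `Q` has zero column sums and `Q_{ji} ≥ ε > 0` for all `j ≠ i`, then every nonzero
complex eigenvalue `λ` of `Q` satisfies `Re λ ≤ −n·ε`. -/
theorem stmt_15 (n : ℕ) (hn : 1 ≤ n) (ε : ℝ) (hε : 0 < ε)
    (Q : Matrix (Fin n) (Fin n) ℝ)
    (hcol : ∀ i, ∑ j, Q j i = 0)
    (hoff : ∀ i j, j ≠ i → ε ≤ Q j i)
    (lam : ℂ) (hlam : lam ≠ 0)
    (hev : ∃ v : Fin n → ℂ, v ≠ 0 ∧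
      (Q.map (Complex.ofReal ·)).mulVec v = lam • v) :
    lam.re ≤ -(n * ε) := by
  obtain ⟨v, hv0, hv⟩ := hev
  set Qc := Q.map (Complex.ofReal ·) with hQc
  set μ : ℂ := lam + (n : ℂ) * (ε : ℂ) with hμ
  -- the sum of entries of v vanishes
  have hsumQ : ∀ i, (∑ j, Qc j i) = 0 := by
    intro i
    have : ((∑ j, Q j i : ℝ) : ℂ) = 0 := by rw [hcol i]; simp
    simpa [Qc, Matrix.map_apply, Complex.ofReal_sum] using this
  have hsum : ∑ j, v j = 0 := by
    have h1 : ∑ i, (Qc.mulVec v) i = lam * ∑ j, v j := by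
      rw [hv]
      simp [Finset.mul_sum]
    have h2 : ∑ i, (Qc.mulVec v) i = 0 := by
      simp only [Matrix.mulVec, dotProduct]
      rw [Finset.sum_comm]
      refine Finset.sum_eq_zero fun j _ => ?_
      rw [← Finset.sum_mul, hsumQ j, zero_mul]
    have := h2.symm.trans h1
    rcases mul_eq_zero.mp this.symm with h | h
    · exact absurd h hlam
    · exact h
  -- the modified matrix Cr (real) and its complexification
  set Cr : Matrix (Fin n) (Fin n) ℝ :=
    fun i j => Q j i - ε + (if i = j then (n : ℝ) * ε else 0) with hCr
  set Cc := Cr.map (Complex.ofReal ·) with hCc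
  -- v is an eigenvector of the transpose of Cc with eigenvalue μ
  have htr : ((Cc.transpose) - μ • 1).mulVec v = 0 := by
    ext i
    have : (Cc.transpose).mulVec v i
        = Qc.mulVec v i - ε * ∑ j, v j + (n : ℝ) * ε * v i := by
      simp only [Matrix.mulVec, dotProduct, Matrix.transpose_apply, Cc, Cr,
        Matrix.map_apply, Qc]
      simp only [Matrix.map, Matrix.of_apply]
      push_cast
      simp only [apply_ite (Complex.ofReal ·), Complex.ofReal_mul, Complex.ofReal_natCast,
        Complex.ofReal_zero, add_mul, sub_mul, ite_mul, zero_mul]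
      rw [Finset.sum_add_distrib, Finset.sum_sub_distrib, Finset.sum_ite_eq' Finset.univ i
        (fun j => (n : ℂ) * (ε : ℂ) * v j)]
      simp [Finset.mul_sum]
    simp only [Matrix.sub_mulVec, Matrix.smul_mulVec, Matrix.one_mulVec,
      Pi.sub_apply, Pi.smul_apply, smul_eq_mul, this, hsum]
    rw [hv]
    simp [hμ]
    ring
  -- hence μ is an eigenvalue of Cc
  have hdet : (Cc - μ • 1).det = 0 := by
    have h0 : ((Cc.transpose) - μ • 1).det = 0 :=
      Matrix.exists_mulVec_eq_zero_iff.mp ⟨v, hv0, htr⟩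
    have : (Cc.transpose) - μ • 1 = (Cc - μ • 1).transpose := by
      rw [Matrix.transpose_sub, Matrix.transpose_smul, Matrix.transpose_one]
    rw [this, Matrix.det_transpose] at h0
    exact h0
  obtain ⟨w, hw0, hw⟩ := Matrix.exists_mulVec_eq_zero_iff.mpr hdet
  have hwe : Cc.mulVec w = μ • w := by
    have := hw
    rw [Matrix.sub_mulVec, Matrix.smul_mulVec, Matrix.one_mulVec, sub_eq_zero] at this
    exact this
  have heig : Module.End.HasEigenvalue (Matrix.toLin' Cc) μ :=
    Module.End.hasEigenvalue_of_hasEigenvector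
      ⟨Module.End.mem_eigenspace_iff.mpr (by rw [Matrix.toLin'_apply]; exact hwe), hw0⟩
  obtain ⟨k, hk⟩ := eigenvalue_mem_ball heig
  -- Gershgorin estimate
  have hoffpos : ∀ j, j ≠ k → 0 ≤ Cr k j := by
    intro j hj
    have := hoff k j hj
    simp only [Cr, if_neg (Ne.symm hj)]
    linarith
  have hrow : ∑ j, Cr k j = 0 := by
    simp only [Cr]
    rw [Finset.sum_add_distrib, Finset.sum_sub_distrib, hcol k,
      Finset.sum_ite_eq Finset.univ k (fun _ => (n : ℝ) * ε)]
    simp [Finset.card_univ]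
  have hradius : ∑ j ∈ Finset.univ.erase k, ‖Cc k j‖ = -Cr k k := by
    have h1 : ∑ j ∈ Finset.univ.erase k, ‖Cc k j‖ = ∑ j ∈ Finset.univ.erase k, Cr k j := by
      refine Finset.sum_congr rfl fun j hj => ?_
      have hj' : j ≠ k := Finset.ne_of_mem_erase hj
      simp only [Cc, Matrix.map_apply, Complex.norm_real]
      exact abs_of_nonneg (hoffpos j hj')
    rw [h1]
    have := Finset.add_sum_erase Finset.univ (fun j => Cr k j) (Finset.mem_univ k)
    linarith [hrow, this]
  rw [Metric.mem_closedBall, hradius] at hk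
  have hre : μ.re - Cr k k ≤ dist μ (Cc k k) := by
    have h1 : μ.re - Cr k k = (μ - Cc k k).re := by
      simp [Cc, Matrix.map_apply]
    calc μ.re - Cr k k = (μ - Cc k k).re := h1
      _ ≤ ‖μ - Cc k k‖ := Complex.re_le_norm _
      _ = dist μ (Cc k k) := (Complex.dist_eq _ _).symm
  have : μ.re ≤ 0 := by linarith
  have hμre : μ.re = lam.re + n * ε := by simp [hμ]
  linarith [hμre ▸ this]
end
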